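/- If a matching M on n men and n women is noncrossing and (m_i, w_x) is a pair crossing no edge of M, then the matching obtained from M by removing the pairs containing m_i and w_x (if any) and adding (m_i, w_x) is again noncrossing. -/
import Mathlib

/-- Pairs `(i,x)` and `(j,y)` cross iff `(i-j)*(x-y) < 0`. -/
def Crosses {n : ℕ} (p q : Fin n × Fin n) : Prop :=
  (((p.1 : ℕ) : ℤ) - ((q.1 : ℕ) : ℤ)) * (((p.2 : ℕ) : ℤ) - ((q.2 : ℕ) : ℤ)) < 0

/-- A matching is a set of man-woman pairs in which no man and no woman
appears twice (a partial injection). -/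
def IsMatching {n : ℕ} (M : Finset (Fin n × Fin n)) : Prop :=
  ∀ p ∈ M, ∀ q ∈ M, (p.1 = q.1 ∨ p.2 = q.2) → p = q

/-- A matching is noncrossing if no two of its pairs cross. -/
def Noncrossing {n : ℕ} (M : Finset (Fin n × Fin n)) : Prop :=
  ∀ p ∈ M, ∀ q ∈ M, ¬ Crosses p q

lemma crosses_symm {n : ℕ} (p q : Fin n × Fin n) : Crosses p q ↔ Crosses q p := by
  unfold Crosses; constructor <;> intro h <;> nlinarith

/-- If `M` is noncrossing and the pair `(i, x)` crosses no edge of `M`, then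
removing the pairs containing `m_i` and `w_x` (if any) and adding `(i, x)`
yields a noncrossing matching. -/
theorem insert_noncrossing {n : ℕ} (M : Finset (Fin n × Fin n))
    (hM : IsMatching M) (hnc : Noncrossing M) (i x : Fin n)
    (h : ∀ q ∈ M, ¬ Crosses (i, x) q) :
    Noncrossing (insert (i, x) (M.filter (fun q => q.1 ≠ i ∧ q.2 ≠ x))) := by
  intro p hp q hq
  simp only [Finset.mem_insert, Finset.mem_filter] at hp hq
  rcases hp with rfl | ⟨hpM, -⟩ <;> rcases hq with rfl | ⟨hqM, -⟩
  · unfold Crosses; simp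
  · exact h _ hqM
  · rw [crosses_symm]; exact h _ hpM
  · exact hnc _ hpM _ hqM
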